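/- Let $n_1 > n_2 \geq 3$ and let $\mathcal{H}_{n_1,n_2}$ be the 3-uniform bi-hypergraph on $X = [n_1] \times [n_2]$ whose edges are the 3-subsets taking exactly 2 distinct values in both coordinates. Suppose $c$ is a proper coloring of $\mathcal{H}_{n_1,n_2}$ in which $(1,1)$ and $(1,2)$ receive distinct colors. Then $c$ equals the partition by second coordinate: two vertices receive the same color if and only if they have the same second coordinate. -/
import Mathlib


/-- Edge set of the 3-uniform bi-hypergraph `H_{n₁,n₂}` on `[n₁] × [n₂]`. -/
def E2 (n1 n2 : ℕ) : Set (Finset (Fin n1 × Fin n2)) :=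
  {b | b.card = 3 ∧ (b.image Prod.fst).card = 2 ∧ (b.image Prod.snd).card = 2}

/-- A proper coloring of a bi-hypergraph. -/
def ProperColoring {X α : Type*} (E : Set (Finset X)) (c : X → α) : Prop :=
  ∀ b ∈ E, (∃ x ∈ b, ∃ y ∈ b, x ≠ y ∧ c x = c y) ∧ (∃ x ∈ b, ∃ y ∈ b, c x ≠ c y)

lemma edge_mem {n1 n2 : ℕ} (a b : Fin n1) (x y : Fin n2) (hab : a ≠ b) (hxy : x ≠ y) :
    ({(a,x),(a,y),(b,x)} : Finset (Fin n1 × Fin n2)) ∈ E2 n1 n2 := by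
  have h1 : ((a,x) : Fin n1 × Fin n2) ≠ (a,y) := by simp [Prod.ext_iff, hxy]
  have h2 : ((a,x) : Fin n1 × Fin n2) ≠ (b,x) := by simp [Prod.ext_iff, hab]
  have h3 : ((a,y) : Fin n1 × Fin n2) ≠ (b,x) := by simp [Prod.ext_iff, hab]
  refine ⟨?_, ?_, ?_⟩
  · rw [Finset.card_insert_of_notMem (by simp [h1, h2]),
      Finset.card_insert_of_notMem (by simp [h3]), Finset.card_singleton]
  · simp only [Finset.image_insert, Finset.image_singleton]
    rw [Finset.card_insert_of_mem (by simp), Finset.card_insert_of_notMem (by simp [hab]),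
      Finset.card_singleton]
  · simp only [Finset.image_insert, Finset.image_singleton]
    rw [Finset.insert_comm, Finset.card_insert_of_notMem (by simp [hxy.symm]),
      Finset.card_insert_of_mem (by simp), Finset.card_singleton]

lemma edge_prop {n1 n2 : ℕ} {α : Type*} {c : Fin n1 × Fin n2 → α}
    (hc : ProperColoring (E2 n1 n2) c) (a b : Fin n1) (x y : Fin n2)
    (hab : a ≠ b) (hxy : x ≠ y) :
    (c (a,x) = c (a,y) ∨ c (a,x) = c (b,x) ∨ c (a,y) = c (b,x)) ∧
      ¬(c (a,x) = c (a,y) ∧ c (a,x) = c (b,x)) := by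
  obtain ⟨⟨u, hu, v, hv, huv, hcv⟩, ⟨u', hu', v', hv', hne⟩⟩ :=
    hc _ (edge_mem a b x y hab hxy)
  simp only [Finset.mem_insert, Finset.mem_singleton] at hu hv hu' hv'
  constructor
  · rcases hu with rfl | rfl | rfl <;> rcases hv with rfl | rfl | rfl <;>
      first
        | exact absurd rfl huv
        | exact Or.inl hcv
        | exact Or.inl hcv.symm
        | exact Or.inr (Or.inl hcv)
        | exact Or.inr (Or.inl hcv.symm)
        | exact Or.inr (Or.inr hcv)
        | exact Or.inr (Or.inr hcv.symm)
  · rintro ⟨e1, e2⟩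
    rcases hu' with rfl | rfl | rfl <;> rcases hv' with rfl | rfl | rfl <;> simp_all

/-- if a proper coloring of `H_{n₁,n₂}` (with `n₁ > n₂ ≥ 3`)
gives `(1,1)` and `(1,2)` distinct colors, then it is the partition by the
second coordinate. -/
theorem stmt17 (n1 n2 : ℕ) (h12 : n2 < n1) (h2 : 3 ≤ n2) {α : Type*}
    (c : Fin n1 × Fin n2 → α) (hc : ProperColoring (E2 n1 n2) c)
    (hdiff : c (⟨0, by omega⟩, ⟨0, by omega⟩) ≠ c (⟨0, by omega⟩, ⟨1, by omega⟩)) :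
    ∀ x y : Fin n1 × Fin n2, c x = c y ↔ x.2 = y.2 := by
  have e1 : ∀ (a b : Fin n1) (x y : Fin n2), a ≠ b → x ≠ y →
      (c (a,x) = c (a,y) ∨ c (a,x) = c (b,x) ∨ c (a,y) = c (b,x)) :=
    fun a b x y hab hxy => (edge_prop hc a b x y hab hxy).1
  have e2 : ∀ (a b : Fin n1) (x y : Fin n2), a ≠ b → x ≠ y →
      ¬(c (a,x) = c (a,y) ∧ c (a,x) = c (b,x)) :=
    fun a b x y hab hxy => (edge_prop hc a b x y hab hxy).2
  -- same colors within a row propagate to all rows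
  have prop : ∀ (x y : Fin n2), x ≠ y → ∀ a : Fin n1, c (a,x) = c (a,y) →
      ∀ b : Fin n1, c (b,x) = c (b,y) := by
    intro x y hxy a ha b
    by_cases hba : b = a
    · subst hba; exact ha
    · have hab : a ≠ b := fun h => hba h.symm
      have h1 : c (b,x) ≠ c (a,x) := fun h => e2 a b x y hab hxy ⟨ha, h.symm⟩
      have h2 : c (b,y) ≠ c (a,x) := fun h =>
        e2 a b y x hab hxy.symm ⟨ha.symm, ha.symm.trans h.symm⟩
      rcases e1 b a x y hba hxy with h | h | h
      · exact h
      · exact absurd h h1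
      · exact absurd h h2
  -- rows are rainbow
  have rainbow : ∀ (a : Fin n1) (x y : Fin n2), x ≠ y → c (a,x) ≠ c (a,y) := by
    intro a x y hxy hEq
    have colEq : ∀ b : Fin n1, c (b,x) = c (b,y) := prop x y hxy a hEq
    have colx : ∀ p q : Fin n1, p ≠ q → c (p,x) ≠ c (q,x) := by
      intro p q hpq h
      exact e2 p q x y hpq hxy ⟨colEq p, h⟩
    obtain ⟨z, hz⟩ : ∃ z : Fin n2, c (⟨0, by omega⟩, x) ≠ c ((⟨0, by omega⟩ : Fin n1), z) := by
      by_cases h0 : c ((⟨0, by omega⟩ : Fin n1), x) = c (⟨0, by omega⟩, (⟨0, by omega⟩ : Fin n2))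
      · exact ⟨⟨1, by omega⟩, fun h => hdiff (h0.symm.trans h)⟩
      · exact ⟨⟨0, by omega⟩, h0⟩
    have hzx : z ≠ x := fun h => hz (by rw [h])
    have hcol : ∀ a : Fin n1, c (a,x) ≠ c (a,z) := by
      intro a h
      exact hz (prop x z (Ne.symm hzx) a h ⟨0, by omega⟩)
    have key : ∀ p q : Fin n1, p ≠ q → c (p,z) = c (q,x) := by
      intro p q hpq
      rcases e1 p q x z hpq (Ne.symm hzx) with h | h | h
      · exact absurd h (hcol p)
      · exact absurd h (colx p q hpq)
      · exact h
    have h10 : c ((⟨1, by omega⟩ : Fin n1), z) = c (⟨0, by omega⟩, x) :=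
      key _ _ (by simp [Fin.ext_iff])
    have h12 : c ((⟨1, by omega⟩ : Fin n1), z) = c (⟨2, by omega⟩, x) :=
      key _ _ (by simp [Fin.ext_iff])
    exact colx ⟨0, by omega⟩ ⟨2, by omega⟩ (by simp [Fin.ext_iff]) (h10.symm.trans h12)
  -- columns are monochromatic
  have colMono : ∀ (x : Fin n2) (a b : Fin n1), c (a,x) = c (b,x) := by
    intro x a b
    by_cases hab : a = b
    · rw [hab]
    · obtain ⟨y, y', hyy', hyx, hy'x⟩ : ∃ y y' : Fin n2, y ≠ y' ∧ y ≠ x ∧ y' ≠ x := by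
        by_cases hx0 : x = ⟨0, by omega⟩
        · exact ⟨⟨1, by omega⟩, ⟨2, by omega⟩, by simp [Fin.ext_iff],
            by simp [hx0, Fin.ext_iff], by simp [hx0, Fin.ext_iff]⟩
        · by_cases hx1 : x = ⟨1, by omega⟩
          · exact ⟨⟨0, by omega⟩, ⟨2, by omega⟩, by simp [Fin.ext_iff],
              by simp [hx1, Fin.ext_iff], by simp [hx1, Fin.ext_iff]⟩
          · exact ⟨⟨0, by omega⟩, ⟨1, by omega⟩, by simp [Fin.ext_iff],
              fun h => hx0 h.symm, fun h => hx1 h.symm⟩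
      have g : ∀ w : Fin n2, w ≠ x → c (a,x) ≠ c (b,x) → c (a,w) = c (b,x) := by
        intro w hwx hne
        rcases e1 a b x w hab (Ne.symm hwx) with h | h | h
        · exact absurd h (rainbow a x w (Ne.symm hwx))
        · exact absurd h hne
        · exact h
      by_contra hne
      exact rainbow a y y' hyy' ((g y hyx hne).trans (g y' hy'x hne).symm)
  rintro ⟨p1, p2⟩ ⟨q1, q2⟩
  constructor
  · intro h
    by_contra hpq
    apply rainbow ⟨0, by omega⟩ p2 q2 hpq
    calc c ((⟨0, by omega⟩ : Fin n1), p2) = c (p1, p2) := colMono p2 _ p1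
      _ = c (q1, q2) := h
      _ = c (⟨0, by omega⟩, q2) := colMono q2 q1 _
  · intro h
    simp only [] at h
    subst h
    exact colMono p2 p1 q1
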